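/- For n ≥ 1 and ρ ∈ ℕ, let W(n,ρ) = Σ w(t), the sum of the Yule–Harding weights of all plane binary trees t with n leaves and c(t) = ρ. Then W(1,0) = 1, W(1,ρ) = 0 for ρ ≥ 1, and for all n ≥ 2 and ρ ≥ 1, W(n,ρ) = (1/(n−1)) · Σ_{d ∈ Div(ρ)} Σ_{j=1}^{n−1} W(j, d−1) · W(n−j, ρ/d − 1), where Div(ρ) is the set of positive divisors of ρ. -/

import Mathlib

/-- Plane binary trees: a leaf, or an ordered pair of plane binary trees. -/
inductive PTree : Type where
  | leaf : PTree
  | node : PTree → PTree → PTree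
deriving DecidableEq

namespace PTree

/-- Number of leaves of a plane binary tree. -/
def leaves : PTree → ℕ
  | leaf => 1
  | node l r => leaves l + leaves r

/-- Number of root ancestral configurations:
`c(leaf) = 0`, `c(node l r) = (c l + 1) * (c r + 1)`. -/
def c : PTree → ℕ
  | leaf => 0
  | node l r => (c l + 1) * (c r + 1)

/-- The finite set of plane binary trees with `n` leaves. -/
def trees : ℕ → Finset PTree
  | 0 => ∅
  | 1 => {leaf}
  | (n+2) =>
      (Finset.Icc 1 (n+1)).attach.biUnion fun j =>
        ((trees j.1) ×ˢ (trees (n+2-j.1))).image fun p => node p.1 p.2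
decreasing_by
  · have h := Finset.mem_Icc.mp j.2; omega
  · have h := Finset.mem_Icc.mp j.2; omega

end PTree

namespace PTree

/-- Yule–Harding weight: `w(leaf) = 1`,
`w(node l r) = w l * w r / (leaves l + leaves r - 1)`. -/
def w : PTree → ℚ
  | leaf => 1
  | node l r => w l * w r / ((leaves l + leaves r - 1 : ℕ) : ℚ)

end PTree

/-- `W n ρ`: the Yule–Harding probability that a plane binary tree with `n` leaves has
exactly `ρ` root configurations, i.e. the sum of the Yule–Harding weights of all plane
binary trees with `n` leaves and `c = ρ`. -/
def W (n ρ : ℕ) : ℚ :=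
  ∑ t ∈ (PTree.trees n).filter (fun t => PTree.c t = ρ), PTree.w t

lemma leaves_of_mem_trees : ∀ n t, t ∈ PTree.trees n → t.leaves = n := by
  intro n
  induction n using Nat.strong_induction_on with
  | _ n ih =>
    match n with
    | 0 => intro t ht; simp [PTree.trees] at ht
    | 1 => intro t ht; simp [PTree.trees] at ht; subst ht; rfl
    | (m+2) =>
      intro t ht
      rw [PTree.trees] at ht
      simp only [Finset.mem_biUnion, Finset.mem_attach, Finset.mem_image,
        Finset.mem_product, true_and] at ht
      obtain ⟨j, ⟨⟨l, r⟩, ⟨hl, hr⟩, rfl⟩⟩ := ht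
      have hj := Finset.mem_Icc.mp j.2
      have h1 := ih j.1 (by omega) l hl
      have h2 := ih (m+2-j.1) (by omega) r hr
      simp only [PTree.leaves, h1, h2]; omega

lemma sum_trees (m : ℕ) (f : PTree → ℚ) :
    ∑ t ∈ PTree.trees (m+2), f t =
      ∑ j ∈ Finset.Icc 1 (m+1), ∑ l ∈ PTree.trees j,
        ∑ r ∈ PTree.trees (m+2-j), f (l.node r) := by
  rw [PTree.trees, Finset.sum_biUnion]
  · rw [← Finset.sum_attach (Finset.Icc 1 (m+1))
      (fun j => ∑ l ∈ PTree.trees j, ∑ r ∈ PTree.trees (m+2-j), f (l.node r))]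
    apply Finset.sum_congr rfl
    intro j _
    rw [Finset.sum_image, Finset.sum_product]
    intro p hp q hq hpq
    simp only [PTree.node.injEq] at hpq
    exact Prod.ext hpq.1 hpq.2
  · intro i _ j _ hij
    simp only [Function.onFun]
    rw [Finset.disjoint_left]
    rintro t ht1 ht2
    simp only [Finset.mem_image, Finset.mem_product] at ht1 ht2
    obtain ⟨⟨l, r⟩, ⟨hl, _⟩, rfl⟩ := ht1
    obtain ⟨⟨l', r'⟩, ⟨hl', _⟩, heq⟩ := ht2
    simp only [PTree.node.injEq] at heq
    have h1 := leaves_of_mem_trees _ _ hl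
    have h2 := leaves_of_mem_trees _ _ hl'
    exact hij (Subtype.ext (by rw [← h1, ← h2, heq.1]))

lemma div_sum (ρ a b : ℕ) (hρ : 1 ≤ ρ) (x : ℚ) :
    (∑ d ∈ ρ.divisors, if a = d - 1 ∧ b = ρ / d - 1 then x else 0)
      = if (a+1) * (b+1) = ρ then x else 0 := by
  have key : ∀ d ∈ ρ.divisors, (if a = d - 1 ∧ b = ρ / d - 1 then x else 0)
      = if d = a + 1 then (if b = ρ / d - 1 then x else 0) else 0 := by
    intro d hd
    have hd1 : 1 ≤ d := Nat.pos_of_mem_divisors hd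
    by_cases h : d = a + 1
    · subst h
      rw [if_pos rfl, Nat.add_sub_cancel]
      simp
    · have : ¬ (a = d - 1) := by omega
      simp [this, h]
  rw [Finset.sum_congr rfl key, Finset.sum_ite_eq' ρ.divisors (a+1)]
  by_cases hmem : (a+1) ∈ ρ.divisors
  · simp only [hmem, if_true]
    have hdvd : (a+1) ∣ ρ := Nat.dvd_of_mem_divisors hmem
    have hq : (a+1) * (ρ / (a+1)) = ρ := Nat.mul_div_cancel' hdvd
    have hq1 : 1 ≤ ρ / (a+1) := Nat.one_le_div_iff (by omega) |>.mpr (Nat.le_of_dvd hρ hdvd)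
    by_cases hb : b = ρ / (a+1) - 1
    · rw [if_pos hb, if_pos]
      subst hb
      rw [show ρ/(a+1) - 1 + 1 = ρ/(a+1) by omega]; exact hq
    · rw [if_neg hb, if_neg]
      intro h
      apply hb
      have : ρ / (a+1) = b + 1 := by rw [← h]; exact Nat.mul_div_cancel_left _ (by omega)
      omega
  · simp only [hmem, if_false]
    have : ¬ ((a+1) * (b+1) = ρ) := by
      intro h
      exact hmem (Nat.mem_divisors.mpr ⟨⟨b+1, h.symm⟩, by omega⟩)
    simp [this]

/-- `W 1 0 = 1`, `W 1 ρ = 0` for `ρ ≥ 1`, and for `n ≥ 2`, `ρ ≥ 1`,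
`W n ρ = (1/(n−1)) · Σ_{d ∣ ρ} Σ_{j=1}^{n−1} W j (d−1) · W (n−j) (ρ/d − 1)`. -/
theorem W_recurrence :
    W 1 0 = 1 ∧ (∀ ρ : ℕ, 1 ≤ ρ → W 1 ρ = 0) ∧
    ∀ n : ℕ, 2 ≤ n → ∀ ρ : ℕ, 1 ≤ ρ →
      W n ρ =
        (1 / ((n : ℚ) - 1)) *
          ∑ d ∈ ρ.divisors, ∑ j ∈ Finset.Icc 1 (n - 1),
            W j (d - 1) * W (n - j) (ρ / d - 1) := by
  refine ⟨?_, ?_, ?_⟩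
  · simp [W, PTree.trees, Finset.filter_singleton, PTree.c, PTree.w]
  · intro ρ hρ
    simp only [W, PTree.trees, Finset.filter_singleton, PTree.c]
    simp only [show ¬ (0 = ρ) by omega, if_false]
    simp
  · intro n hn ρ hρ
    obtain ⟨m, rfl⟩ : ∃ m, n = m + 2 := ⟨n - 2, by omega⟩
    have hm1 : m + 2 - 1 = m + 1 := rfl
    rw [hm1]
    have L : W (m+2) ρ = ∑ j ∈ Finset.Icc 1 (m+1), ∑ l ∈ PTree.trees j,
        ∑ r ∈ PTree.trees (m+2-j),
        (if (PTree.c l + 1) * (PTree.c r + 1) = ρ then PTree.w l * PTree.w r else 0)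
          / ((m+1 : ℕ) : ℚ) := by
      rw [W, Finset.sum_filter, sum_trees]
      refine Finset.sum_congr rfl fun j hj => Finset.sum_congr rfl fun l hl =>
        Finset.sum_congr rfl fun r hr => ?_
      have hjm := Finset.mem_Icc.mp hj
      have h1 := leaves_of_mem_trees _ _ hl
      have h2 := leaves_of_mem_trees _ _ hr
      have hlr : l.leaves + r.leaves - 1 = m + 1 := by omega
      simp only [PTree.c, PTree.w, hlr]
      split <;> simp
    have R : ∀ d : ℕ, ∀ j ∈ Finset.Icc 1 (m+1), W j (d-1) * W (m+2-j) (ρ/d-1) =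
        ∑ l ∈ PTree.trees j, ∑ r ∈ PTree.trees (m+2-j),
          (if PTree.c l = d-1 ∧ PTree.c r = ρ/d-1 then PTree.w l * PTree.w r else 0) := by
      intro d j hj
      rw [W, W, Finset.sum_filter, Finset.sum_filter, Finset.sum_mul_sum]
      refine Finset.sum_congr rfl fun l _ => Finset.sum_congr rfl fun r _ => ?_
      by_cases h1 : PTree.c l = d-1 <;> by_cases h2 : PTree.c r = ρ/d-1 <;> simp [h1, h2]
    have RR : ∑ d ∈ ρ.divisors, ∑ j ∈ Finset.Icc 1 (m+1), W j (d-1) * W (m+2-j) (ρ/d-1)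
        = ∑ j ∈ Finset.Icc 1 (m+1), ∑ l ∈ PTree.trees j, ∑ r ∈ PTree.trees (m+2-j),
            if (PTree.c l + 1) * (PTree.c r + 1) = ρ then PTree.w l * PTree.w r else 0 := by
      rw [Finset.sum_comm]
      refine Finset.sum_congr rfl fun j hj => ?_
      rw [Finset.sum_congr rfl (fun d _ => R d j hj), Finset.sum_comm]
      refine Finset.sum_congr rfl fun l _ => ?_
      rw [Finset.sum_comm]
      refine Finset.sum_congr rfl fun r _ => ?_
      exact div_sum ρ _ _ hρ _
    rw [RR, L, Finset.mul_sum]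
    refine Finset.sum_congr rfl fun j _ => ?_
    rw [Finset.mul_sum]
    refine Finset.sum_congr rfl fun l _ => ?_
    rw [Finset.mul_sum]
    refine Finset.sum_congr rfl fun r _ => ?_
    push_cast
    ring
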